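/- Let G = (V, E) be a d-regular graph with adjacency matrix A, and let λ ≥ 0 be such that ‖Ax‖ ≤ λ‖x‖ for every vector x orthogonal to the all-ones vector. Let S, T ⊆ V with S nonempty, and let μ be a probability distribution supported on S such that μ(b) ≤ c·μ(b') for every two elements b, b' ∈ S. If u is drawn according to μ and v is a uniformly random neighbor of u, then Pr[v ∈ T] ≤ |T|/|V| + (λ/d)·√(c·|T|/|S|). -/

import Mathlib

open Finset

/-- expander mixing bound, weighted version.  Let `A` be the adjacency
matrix (with natural number multiplicities, self loops allowed) of a `d`-regular graph on a
finite vertex set, and let `λ ≥ 0` satisfy `‖Ax‖ ≤ λ‖x‖` for every `x` orthogonal to the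
all-ones vector.  Let `S, T ⊆ V` with `S` nonempty and let `μ` be a probability distribution
supported on `S` with `μ(b) ≤ c·μ(b')` for all `b, b' ∈ S`.  Picking `u ∼ μ` and `v` a
uniformly random neighbor of `u` (i.e. with probability `A u v / d`),
`Pr[v ∈ T] ≤ |T|/|V| + (λ/d)·√(c·|T|/|S|)`. -/
theorem expander_mixing_weighted {ι : Type*} [Fintype ι] [DecidableEq ι]
    (A : ι → ι → ℕ) (d : ℕ) (hd : 0 < d)
    (hsym : ∀ u v, A u v = A v u)
    (hreg : ∀ u, ∑ v, A u v = d)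
    (lam : ℝ) (hlam : 0 ≤ lam)
    (hspec : ∀ x : ι → ℝ, (∑ v, x v) = 0 →
      Real.sqrt (∑ u, (∑ v, (A u v : ℝ) * x v) ^ 2) ≤ lam * Real.sqrt (∑ v, x v ^ 2))
    (S T : Finset ι) (hS : S.Nonempty) (c : ℝ)
    (μ : ι → ℝ) (hμ0 : ∀ u, 0 ≤ μ u) (hμ1 : ∑ u, μ u = 1)
    (hμS : ∀ u, u ∉ S → μ u = 0)
    (hμc : ∀ b ∈ S, ∀ b' ∈ S, μ b ≤ c * μ b') :
    (∑ u, μ u * ((∑ v ∈ T, (A u v : ℝ)) / d)) ≤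
      (T.card : ℝ) / (Fintype.card ι : ℝ) +
        (lam / d) * Real.sqrt (c * (T.card : ℝ) / (S.card : ℝ)) := by
  classical
  obtain ⟨b₀, hb₀⟩ := hS
  haveI : Nonempty ι := ⟨b₀⟩
  set n : ℝ := (Fintype.card ι : ℝ) with hn_def
  have hn : (0:ℝ) < n := by
    have : 0 < Fintype.card ι := Fintype.card_pos
    rw [hn_def]; exact_mod_cast this
  have hdR : (0:ℝ) < (d:ℝ) := by exact_mod_cast hd
  have hScard : (0:ℝ) < (S.card : ℝ) := by
    exact_mod_cast Finset.card_pos.mpr ⟨b₀, hb₀⟩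
  have hμSsum : ∑ b ∈ S, μ b = 1 := by
    rw [← hμ1]
    exact Finset.sum_subset S.subset_univ (fun u _ hu => hμS u hu)
  have hμboundS : ∀ u ∈ S, μ u ≤ c / S.card := by
    intro u hu
    have h1 : (S.card : ℝ) * μ u ≤ c := by
      calc (S.card : ℝ) * μ u = ∑ _b' ∈ S, μ u := by
            rw [Finset.sum_const, nsmul_eq_mul]
        _ ≤ ∑ b' ∈ S, c * μ b' := Finset.sum_le_sum fun b' hb' => hμc u hu b' hb'
        _ = c := by rw [← Finset.mul_sum, hμSsum, mul_one]
    rw [le_div_iff₀ hScard]; linarith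
  have hc : 0 ≤ c := by
    have h0 := (hμ0 b₀).trans (hμboundS b₀ hb₀)
    have := (div_nonneg_iff.mp h0)
    rcases this with ⟨h, _⟩ | ⟨_, h⟩
    · exact h
    · linarith
  have hμbound : ∀ u, μ u ≤ c / S.card := by
    intro u
    by_cases hu : u ∈ S
    · exact hμboundS u hu
    · rw [hμS u hu]; positivity
  -- centered vector
  set x : ι → ℝ := fun u => μ u - 1 / n with hx_def
  have hx0 : ∑ v, x v = 0 := by
    simp only [hx_def, Finset.sum_sub_distrib, hμ1, Finset.sum_const, nsmul_eq_mul,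
      Finset.card_univ]
    field_simp
    rw [hn_def]; ring
  -- bound on ∑ x²
  have hxsq : ∑ v, x v ^ 2 ≤ c / S.card := by
    have hexp : ∑ v, x v ^ 2 = (∑ v, μ v ^ 2) - 1 / n := by
      have : ∀ v, x v ^ 2 = μ v ^ 2 - (2 / n) * μ v + 1 / n ^ 2 := by
        intro v; simp only [hx_def]; ring
      rw [Finset.sum_congr rfl fun v _ => this v]
      rw [Finset.sum_add_distrib, Finset.sum_sub_distrib, ← Finset.mul_sum, hμ1,
        Finset.sum_const, nsmul_eq_mul, Finset.card_univ, ← hn_def]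
      field_simp
      ring
    have hμsq : ∑ v, μ v ^ 2 ≤ c / S.card := by
      calc ∑ v, μ v ^ 2 ≤ ∑ v, (c / S.card) * μ v := by
            refine Finset.sum_le_sum fun v _ => ?_
            rw [sq]
            exact mul_le_mul_of_nonneg_right (hμbound v) (hμ0 v)
        _ = c / S.card := by rw [← Finset.mul_sum, hμ1, mul_one]
    have h1n : (0:ℝ) ≤ 1 / n := by positivity
    linarith
  set y : ι → ℝ := fun v => ∑ w, (A v w : ℝ) * x w with hy_def
  -- rewrite LHS
  have hrow : ∀ v, ∑ u, (A v u : ℝ) = (d : ℝ) := by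
    intro v
    rw [← Nat.cast_sum]
    exact_mod_cast congrArg Nat.cast (hreg v)
  have key : ∀ v, ∑ u, (A v u : ℝ) * μ u = y v + d / n := by
    intro v
    have : ∀ u, (A v u : ℝ) * μ u = (A v u : ℝ) * x u + (A v u : ℝ) * (1 / n) := by
      intro u; simp only [hx_def]; ring
    rw [Finset.sum_congr rfl fun u _ => this u, Finset.sum_add_distrib, ← Finset.sum_mul,
      hrow]
    simp only [hy_def]
    ring
  have hLHS : (∑ u, μ u * ((∑ v ∈ T, (A u v : ℝ)) / d)) =
      (∑ v ∈ T, y v) / d + (T.card : ℝ) / n := by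
    have step : ∀ u, μ u * ((∑ v ∈ T, (A u v : ℝ)) / d) =
        ∑ v ∈ T, (A v u : ℝ) * μ u / d := by
      intro u
      rw [Finset.sum_div, Finset.mul_sum]
      refine Finset.sum_congr rfl fun v _ => ?_
      rw [hsym v u]
      ring
    have h1 : (∑ u, μ u * ((∑ v ∈ T, (A u v : ℝ)) / d)) =
        (∑ v ∈ T, ∑ u, (A v u : ℝ) * μ u) / d := by
      calc (∑ u, μ u * ((∑ v ∈ T, (A u v : ℝ)) / d))
          = ∑ u, ∑ v ∈ T, (A v u : ℝ) * μ u / d :=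
            Finset.sum_congr rfl fun u _ => step u
        _ = ∑ v ∈ T, ∑ u, (A v u : ℝ) * μ u / d := Finset.sum_comm
        _ = (∑ v ∈ T, ∑ u, (A v u : ℝ) * μ u) / d := by
            rw [Finset.sum_div]
            exact Finset.sum_congr rfl fun v _ => (Finset.sum_div _ _ _).symm
    rw [h1, Finset.sum_congr rfl fun v _ => key v, Finset.sum_add_distrib,
      Finset.sum_const, nsmul_eq_mul, add_div]
    congr 1
    field_simp
  -- bound ∑_{v ∈ T} y v
  have hTb : ∑ v ∈ T, y v ≤ lam * Real.sqrt (c * (T.card : ℝ) / S.card) := by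
    have hCS : (∑ v ∈ T, y v) ^ 2 ≤ (T.card : ℝ) * ∑ v ∈ T, y v ^ 2 := by
      have := Finset.sum_mul_sq_le_sq_mul_sq T (fun _ => (1:ℝ)) y
      simpa using this
    have hsub : ∑ v ∈ T, y v ^ 2 ≤ ∑ v, y v ^ 2 :=
      Finset.sum_le_sum_of_subset_of_nonneg T.subset_univ fun v _ _ => sq_nonneg _
    have h2 : (∑ v ∈ T, y v) ≤ Real.sqrt ((T.card : ℝ)) * Real.sqrt (∑ v, y v ^ 2) := by
      have := Real.sqrt_le_sqrt (hCS.trans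
        (mul_le_mul_of_nonneg_left hsub (Nat.cast_nonneg _)))
      calc (∑ v ∈ T, y v) ≤ Real.sqrt ((∑ v ∈ T, y v) ^ 2) := by
            rw [Real.sqrt_sq_eq_abs]; exact le_abs_self _
        _ ≤ Real.sqrt ((T.card : ℝ) * ∑ v, y v ^ 2) := this
        _ = Real.sqrt ((T.card : ℝ)) * Real.sqrt (∑ v, y v ^ 2) :=
            Real.sqrt_mul (Nat.cast_nonneg _) _
    have h3 : Real.sqrt (∑ v, y v ^ 2) ≤ lam * Real.sqrt (c / S.card) := by
      refine (hspec x hx0).trans ?_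
      exact mul_le_mul_of_nonneg_left (Real.sqrt_le_sqrt hxsq) hlam
    calc (∑ v ∈ T, y v) ≤ Real.sqrt ((T.card : ℝ)) * (lam * Real.sqrt (c / S.card)) := by
          refine h2.trans (mul_le_mul_of_nonneg_left h3 (Real.sqrt_nonneg _))
      _ = lam * (Real.sqrt ((T.card : ℝ)) * Real.sqrt (c / S.card)) := by ring
      _ = lam * Real.sqrt (c * (T.card : ℝ) / S.card) := by
          rw [← Real.sqrt_mul (Nat.cast_nonneg _)]
          congr 1
          ring
  rw [hLHS]
  have hfinal : (∑ v ∈ T, y v) / d ≤ (lam / d) * Real.sqrt (c * (T.card : ℝ) / S.card) := by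
    rw [div_le_iff₀ hdR] at *
    calc (∑ v ∈ T, y v) ≤ lam * Real.sqrt (c * (T.card : ℝ) / S.card) := hTb
      _ = lam / d * Real.sqrt (c * (T.card : ℝ) / S.card) * d := by field_simp
  linarith
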